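/- Let n ≥ 2. Define the odd-even transposition process on positions 1..n: at odd-numbered rounds simultaneously swap the contents of positions (i, i+1) for all odd i < n, and at even-numbered rounds swap positions (i, i+1) for all even i < n. After n rounds, the agent that started at position i is at position n+1−i. -/

import Mathlib

/-- One round of the odd-even transposition process on positions `1..n`:
round `r` swaps positions `(i, i+1)` for all `i < n` with `i` of the same parity as `r`. -/
def oeStep (n r p : ℕ) : ℕ :=
  if r % 2 = 1 then
    if p % 2 = 1 ∧ p < n then p + 1
    else if p % 2 = 0 then p - 1
    else p
  else
    if p % 2 = 0 ∧ p < n then p + 1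
    else if p % 2 = 1 ∧ 1 < p then p - 1
    else p

/-- `oePos n i t` is the position after `t` rounds of the agent that started at position `i`. -/
def oePos (n i : ℕ) : ℕ → ℕ
  | 0 => i
  | t + 1 => oeStep n (t + 1) (oePos n i t)

/-- Closed form for the trajectory. -/
def oeAux (n i t : ℕ) : ℕ :=
  if i % 2 = 1 then (if t ≤ n - i then i + t else 2 * n + 1 - i - t)
  else (if t < i then i - t else t - i + 1)

lemma oePos_eq_aux (n : ℕ) (hn : 2 ≤ n) (i : ℕ) (hi1 : 1 ≤ i) (hin : i ≤ n) :
    ∀ t, t ≤ n → oePos n i t = oeAux n i t := by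
  intro t
  induction t with
  | zero => intro _; simp [oePos, oeAux]; omega
  | succ t ih =>
    intro ht
    have ih' := ih (by omega)
    show oeStep n (t + 1) (oePos n i t) = oeAux n i (t + 1)
    rw [ih']
    unfold oeStep oeAux
    split_ifs <;> omega

theorem oe_reversal (n : ℕ) (hn : 2 ≤ n) (i : ℕ) (hi1 : 1 ≤ i) (hin : i ≤ n) :
    oePos n i n = n + 1 - i := by
  rw [oePos_eq_aux n hn i hi1 hin n le_rfl]
  unfold oeAux
  split_ifs <;> omega
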